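/- Let ÷ satisfy AGM postulates (K−1)–(K−8) on a consistent deductively closed K. With f(s,‖φ‖) = ‖K÷¬φ‖ ∩ ‖φ‖ on the canonical space, f satisfies non-emptiness: for contingent φ (φ not a tautology and ¬φ not a tautology), ‖K÷¬φ‖ ∩ ‖φ‖ ≠ ∅. -/

import Mathlib

/-- Boolean propositional formulas over countably many atoms. -/
inductive Fm where
  | atom : ℕ → Fm
  | neg  : Fm → Fm
  | disj : Fm → Fm → Fm

namespace Fm

def imp (φ ψ : Fm) : Fm := disj (neg φ) ψ
def conj (φ ψ : Fm) : Fm := neg (disj (neg φ) (neg ψ))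
def biimp (φ ψ : Fm) : Fm := conj (imp φ ψ) (imp ψ φ)

def eval (v : ℕ → Bool) : Fm → Bool
  | atom n => v n
  | neg φ => !(eval v φ)
  | disj φ ψ => eval v φ || eval v ψ

def Taut (φ : Fm) : Prop := ∀ v : ℕ → Bool, eval v φ = true

end Fm

/-- Classical propositional consequence: ψ ∈ Cn K iff some finite list of members
of K has ψ as a tautological consequence. -/
def Cn (K : Set Fm) : Set Fm :=
  {ψ | ∃ l : List Fm, (∀ φ ∈ l, φ ∈ K) ∧
    ∀ v : ℕ → Bool, (∀ φ ∈ l, Fm.eval v φ = true) → Fm.eval v ψ = true}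

def Consistent (A : Set Fm) : Prop := Cn A ≠ Set.univ

/-- The eight AGM contraction postulates. -/
structure AGM (K : Set Fm) (div : Fm → Set Fm) : Prop where
  closure : ∀ φ : Fm, div φ = Cn (div φ)
  inclusion : ∀ φ : Fm, div φ ⊆ K
  vacuity : ∀ φ : Fm, φ ∉ K → K ⊆ div φ
  success : ∀ φ : Fm, ¬ Fm.Taut φ → φ ∉ div φ
  recovery : ∀ φ : Fm, φ ∈ K → K ⊆ Cn (div φ ∪ {φ})
  extensionality : ∀ φ ψ : Fm, Fm.Taut (Fm.biimp φ ψ) → div φ = div ψ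
  conjOverlap : ∀ φ ψ : Fm, div φ ∩ div ψ ⊆ div (Fm.conj φ ψ)
  conjInclusion : ∀ φ ψ : Fm, φ ∉ div (Fm.conj φ ψ) → div (Fm.conj φ ψ) ⊆ div φ

/-- Maximally consistent set of formulas. -/
def MCS (Γ : Set Fm) : Prop :=
  Consistent Γ ∧ ∀ Δ : Set Fm, Γ ⊆ Δ → Consistent Δ → Δ = Γ

/-- The canonical state space: maximally consistent sets. -/
def CS := {Γ : Set Fm // MCS Γ}

/-- ‖φ‖ for a formula. -/
def tsF (φ : Fm) : Set CS := {s | φ ∈ s.val}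

/-- ‖Ψ‖ for a set of formulas. -/
def tsS (Ψ : Set Fm) : Set CS := {s | Ψ ⊆ s.val}

/- Auxiliary material for the proof. -/

/-- A canonical contradiction. -/
def falsum : Fm := Fm.neg (Fm.disj (Fm.atom 0) (Fm.neg (Fm.atom 0)))

lemma falsum_eval (v : ℕ → Bool) : Fm.eval v falsum = false := by
  simp [falsum, Fm.eval]

lemma inconsistent_iff (A : Set Fm) : ¬ Consistent A ↔ falsum ∈ Cn A := by
  constructor
  · intro h
    have : Cn A = Set.univ := by
      by_contra hc; exact h hc
    rw [this]; trivial
  · rintro ⟨l, hl, hv⟩ hCons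
    apply hCons
    ext ψ
    simp only [Set.mem_univ, iff_true]
    refine ⟨l, hl, fun v hvl => ?_⟩
    have := hv v hvl
    rw [falsum_eval] at this
    exact absurd this (by simp)

noncomputable instance : DecidableEq Fm := Classical.decEq Fm

/-- A finite list inside the union of a nonempty chain lies in one member. -/
lemma list_in_chain {c : Set (Set Fm)} (hchain : IsChain (· ⊆ ·) c)
    (hne : c.Nonempty) (l : List Fm) (hl : ∀ x ∈ l, x ∈ ⋃₀ c) :
    ∃ t ∈ c, ∀ x ∈ l, x ∈ t := by
  induction l with
  | nil => exact ⟨hne.choose, hne.choose_spec, by simp⟩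
  | cons a l ih =>
    obtain ⟨t, htc, htl⟩ := ih (fun x hx => hl x (List.mem_cons_of_mem _ hx))
    obtain ⟨u, huc, hau⟩ := hl a List.mem_cons_self
    rcases eq_or_ne t u with rfl | hne'
    · exact ⟨t, htc, fun x hx => by rcases List.mem_cons.mp hx with rfl | hx; exacts [hau, htl x hx]⟩
    rcases hchain htc huc hne' with h | h
    · exact ⟨u, huc, fun x hx => by rcases List.mem_cons.mp hx with rfl | hx; exacts [hau, h (htl x hx)]⟩
    · exact ⟨t, htc, fun x hx => by rcases List.mem_cons.mp hx with rfl | hx; exacts [h hau, htl x hx]⟩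

/-- Lindenbaum: every consistent set extends to a maximally consistent set. -/
lemma lindenbaum {A : Set Fm} (hA : Consistent A) : ∃ Γ, A ⊆ Γ ∧ MCS Γ := by
  obtain ⟨m, hAm, hmax⟩ := zorn_subset_nonempty {B | Consistent B}
    (fun c hc hchain hne => by
      refine ⟨⋃₀ c, ?_, fun s hs => Set.subset_sUnion_of_mem hs⟩
      by_contra hbad
      obtain ⟨l, hl, hv⟩ := (inconsistent_iff _).mp hbad
      obtain ⟨t, htc, htl⟩ := list_in_chain hchain hne l hl
      exact ((inconsistent_iff t).mpr ⟨l, htl, hv⟩) (hc htc)) A hA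
  exact ⟨m, hAm, hmax.prop, fun Δ hΔ hΔc => (hmax.eq_of_subset hΔc hΔ).symm⟩

/-- non-emptiness of the canonical selection function. -/
theorem canonical_nonempty (K : Set Fm) (hcons : Consistent K)
    (hclosed : K = Cn K) (div : Fm → Set Fm) (hagm : AGM K div)
    (φ : Fm) (hcont : ¬ Fm.Taut φ ∧ ¬ Fm.Taut (Fm.neg φ)) :
    (tsS (div (Fm.neg φ)) ∩ tsF φ).Nonempty := by
  obtain ⟨hnt, hnnt⟩ := hcont
  -- div (¬φ) ∪ {φ} is consistent
  have hBcons : Consistent (div (Fm.neg φ) ∪ {φ}) := by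
    by_contra hbad
    obtain ⟨l, hl, hv⟩ := (inconsistent_iff _).mp hbad
    -- then ¬φ ∈ Cn (div ¬φ) = div ¬φ, contradicting success
    have hmem : Fm.neg φ ∈ Cn (div (Fm.neg φ)) := by
      refine ⟨l.filter (· ≠ φ), ?_, ?_⟩
      · intro x hx
        have hx' := List.mem_filter.mp hx
        rcases hl x hx'.1 with h | h
        · exact h
        · exact absurd h (by simpa using hx'.2)
      · intro v hvl
        simp only [Fm.eval]
        cases hφ : Fm.eval v φ with
        | false => rfl
        | true =>
          have : ∀ x ∈ l, Fm.eval v x = true := by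
            intro x hx
            by_cases hxφ : x = φ
            · rw [hxφ]; exact hφ
            · exact hvl x (List.mem_filter.mpr ⟨hx, by simpa using hxφ⟩)
          have := hv v this
          rw [falsum_eval] at this
          exact absurd this (by simp)
    rw [← hagm.closure] at hmem
    exact hagm.success (Fm.neg φ) hnnt hmem
  obtain ⟨Γ, hBΓ, hΓ⟩ := lindenbaum hBcons
  exact ⟨⟨Γ, hΓ⟩, fun x hx => hBΓ (Or.inl hx), hBΓ (Or.inr rfl)⟩
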